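/- Let f : Aⁿ → B be determined by ofo, say f = f* ∘ ofo restricted to Aⁿ. Then for every 2-element subset I of {1,…,n}, the identification minor f_I equals f* ∘ ofo restricted to A^{n-1}; in particular all identification minors of f are equal. -/

import Mathlib

/-- `ofo` maps a string to the subsequence retaining only the first occurrence of each symbol. -/
def ofo {A : Type*} [DecidableEq A] : List A → List A
  | [] => []
  | a :: l => a :: ofo (l.filter (· ≠ a))
termination_by l => l.length
decreasing_by
  simp only [List.length_cons]
  exact Nat.lt_succ_of_le ((List.length_unattach ..).le.trans ((List.length_filter_le _ _).trans (List.length_attach ..).le))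

/-- For `I = {i, j}` with `i < j` (0-indexed, in `Fin (n+1)`), the map
`δ_I : Fin (n+1) → Fin n`: `m ↦ m` for `m < j`, `j ↦ i`, `m ↦ m - 1` for `m > j`. -/
def deltaMap {n : ℕ} (i j : Fin (n+1)) (hij : (i:ℕ) < j) : Fin (n+1) → Fin n :=
  fun m =>
    if _ : (m:ℕ) < j then ⟨m, by have := j.isLt; omega⟩
    else if _ : (m:ℕ) = j then ⟨i, by have := j.isLt; omega⟩
    else ⟨(m:ℕ) - 1, by have := m.isLt; omega⟩

lemma ofo_dup {A : Type*} [DecidableEq A] :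
    ∀ (l₁ : List A) (x : A), x ∈ l₁ → ∀ l₂, ofo (l₁ ++ x :: l₂) = ofo (l₁ ++ l₂)
  | [], x, hx, l₂ => by simp at hx
  | a :: t, x, hx, l₂ => by
    rw [List.cons_append, List.cons_append, ofo, ofo]
    simp only [List.filter_append]
    by_cases hxa : x = a
    · subst hxa
      simp [List.filter_cons]
    · have hxt : x ∈ t := by
        rcases List.mem_cons.mp hx with h | h
        · exact absurd h hxa
        · exact h
      have hxt' : x ∈ t.filter (· ≠ a) := by
        simp only [List.mem_filter, decide_eq_true_eq, ne_eq]
        exact ⟨hxt, hxa⟩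
      rw [show (x :: l₂).filter (· ≠ a) = x :: l₂.filter (· ≠ a) by
        simp [List.filter_cons, hxa]]
      rw [ofo_dup (t.filter (· ≠ a)) x hxt' (l₂.filter (· ≠ a))]
termination_by l₁ => l₁.length
decreasing_by
  simp only [List.length_cons]
  exact Nat.lt_succ_of_le (List.length_filter_le _ _)

/-- if `f : A^{n+1} → B` is determined by ofo via `f*`, then every
identification minor `f_I` equals `f* ∘ ofo` on `Aⁿ`; in particular all identification
minors of `f` are equal. -/
theorem stmt13 {A B : Type*} [DecidableEq A] {n : ℕ} (f : (Fin (n+1) → A) → B)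
    (fstar : List A → B)
    (hf : ∀ a : Fin (n+1) → A, f a = fstar (ofo (List.ofFn a))) :
    ∀ (i j : Fin (n+1)) (hij : (i:ℕ) < j) (a : Fin n → A),
      f (a ∘ deltaMap i j hij) = fstar (ofo (List.ofFn a)) := by
  intro i j hij a
  rw [hf]
  congr 1
  set l := List.ofFn a with hl
  have hlen : l.length = n := by simp [hl]
  have hjn : (j:ℕ) ≤ n := by have := j.isLt; omega
  have hin : (i:ℕ) < n := by omega
  set x : A := a ⟨i, hin⟩ with hx
  have heq : List.ofFn (a ∘ deltaMap i j hij) = l.take j ++ x :: l.drop j := by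
    apply List.ext_getElem
    · simp [hlen]; omega
    · intro m h1 h2
      simp only [List.length_ofFn] at h1
      simp only [List.getElem_ofFn, Function.comp_apply, deltaMap]
      by_cases hm : m < (j:ℕ)
      · rw [List.getElem_append_left (by simp [hlen]; omega)]
        rw [dif_pos hm]
        simp [hl]
      · rw [List.getElem_append_right (by simp [hlen]; omega)]
        simp only [List.length_take, hlen, min_eq_left hjn]
        by_cases hm2 : m = (j:ℕ)
        · rw [dif_neg hm, dif_pos hm2]
          have : m - (j:ℕ) = 0 := by omega
          simp [this, hl, hx]
        · rw [dif_neg hm, dif_neg hm2]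
          rw [List.getElem_cons]
          rw [dif_neg (by omega)]
          simp only [List.getElem_drop]
          simp [hl]
          congr 1
          simp only [Fin.mk.injEq]
          omega
  rw [heq]
  have hmem : x ∈ l.take j := by
    have : (l.take j)[(i:ℕ)]'(by simp [hlen]; omega) = x := by
      rw [List.getElem_take]
      simp [hl, hx]
    rw [← this]
    exact List.getElem_mem _
  rw [ofo_dup _ _ hmem, List.take_append_drop]
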